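/- Footprint bound with consecutive derivatives: let J ⊆ ℕᵐ be a finite decreasing set, I ⊆ F[x₁,...,xₘ] an ideal, S₁,...,Sₘ ⊆ F finite sets with defining polynomials G_j(x_j) = ∏_{s∈S_j}(x_j − s), and S = S₁×···×Sₘ. Let I_J = I + ⟨∏_{j=1}^m G_j(x_j)^{r_j} : (r₁,...,rₘ) ∉ J⟩ and let V_J(I) = {a ∈ S : F^(i)(a) = 0 for all F ∈ I, i ∈ J}. Then for any monomial ordering, #V_J(I) · #J ≤ #Δ(I_J), where Δ(I_J) is the set of monomials not in the leading monomial ideal of I_J. -/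

import Mathlib

open MvPolynomial

/-- The `i`-th Hasse derivative of a multivariate polynomial, characterized by
`F(x+z) = Σ_i F^(i)(x) z^i`. -/
noncomputable def mvHasseDeriv {K : Type*} [CommSemiring K] {σ : Type*}
    (i : σ →₀ ℕ) (F : MvPolynomial σ K) : MvPolynomial σ K :=
  (AddMonoidAlgebra.coeff F).sum fun k c => monomial (k - i) ((i.prod fun j ij => (k j).choose ij : ℕ) * c)


/-- `i` is the leading monomial (exponent) of `F` with respect to the monomial order `ord`. -/
def IsLeadingMonomial {K : Type*} [CommSemiring K] {m : ℕ} (ord : MonomialOrder (Fin m))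
    (F : MvPolynomial (Fin m) K) (i : Fin m →₀ ℕ) : Prop :=
  i ∈ F.support ∧ ∀ k ∈ F.support, ord.toSyn k ≤ ord.toSyn i

/-- The footprint of an ideal: exponents of monomials not in the ideal generated by the
leading monomials of the (nonzero) elements of the ideal. -/
def footprint {K : Type*} [Field K] {m : ℕ} (ord : MonomialOrder (Fin m))
    (Kid : Ideal (MvPolynomial (Fin m) K)) : Set (Fin m →₀ ℕ) :=
  {i | (MvPolynomial.monomial i (1 : K)) ∉
    Ideal.span {g | ∃ F ∈ Kid, ∃ l, IsLeadingMonomial ord F l ∧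
      g = MvPolynomial.monomial l (1 : K)}}

section Aux

variable {K : Type*} [CommSemiring K] {m : ℕ}

lemma FPaux.coeff_mul_X_addC (i : Fin m →₀ ℕ) (j : Fin m) (c : K) (P : MvPolynomial (Fin m) K) :
    coeff i (P * (X j + C c)) =
      (if i j = 0 then 0 else coeff (i - Finsupp.single j 1) P) + c * coeff i P := by
  rw [mul_add, coeff_add, coeff_mul_X', mul_comm P (C c), coeff_C_mul]
  congr 1
  simp [Finsupp.mem_support_iff]

lemma FPaux.coeffG (a : Fin m → K) (k i : Fin m →₀ ℕ) :
    coeff i (∏ j, (X j + C (a j)) ^ (k j) : MvPolynomial (Fin m) K)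
      = (∏ j, ((k j).choose (i j) : K)) * ∏ j, (a j) ^ (k j - i j) := by
  have H : ∀ (N : ℕ) (k : Fin m →₀ ℕ), (∑ j, k j) = N → ∀ i : Fin m →₀ ℕ,
      coeff i (∏ j, (X j + C (a j)) ^ (k j) : MvPolynomial (Fin m) K)
      = (∏ j, ((k j).choose (i j) : K)) * ∏ j, (a j) ^ (k j - i j) := by
    intro N
    induction N with
    | zero =>
      intro k hk i
      have hk0 : k = 0 := by
        ext j
        have := Finset.sum_eq_zero_iff.mp hk j (Finset.mem_univ j)
        simpa using this
      subst hk0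
      simp only [Finsupp.coe_zero, Pi.zero_apply, pow_zero, Finset.prod_const_one,
        Nat.zero_sub, Nat.choose_zero_right, Nat.choose, mul_one]
      by_cases hi : i = 0
      · subst hi; simp
      · obtain ⟨j, hj⟩ : ∃ j, i j ≠ 0 := by
          by_contra h
          push_neg at h
          exact hi (Finsupp.ext fun j => h j)
        rw [coeff_one, if_neg (by exact fun h => hj (by simp [← h]))]
        symm
        apply Finset.prod_eq_zero (Finset.mem_univ j)
        simp [Nat.choose_eq_zero_of_lt (Nat.pos_of_ne_zero hj)]
    | succ n ih =>
      intro k hk i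
      obtain ⟨j, hj⟩ : ∃ j, k j ≠ 0 := by
        by_contra h
        push_neg at h
        simp [h] at hk
      set k' : Fin m →₀ ℕ := k - Finsupp.single j 1 with hk'def
      have hsle : Finsupp.single j 1 ≤ k := by
        rw [Finsupp.single_le_iff]; omega
      have hkk : k = k' + Finsupp.single j 1 := by
        rw [hk'def, tsub_add_cancel_of_le hsle]
      have hk'j : ∀ l, k' l = if l = j then k j - 1 else k l := by
        intro l
        rw [hk'def, Finsupp.tsub_apply, Finsupp.single_apply]
        by_cases h : l = j
        · subst h; simp
        · rw [if_neg (fun hh => h hh.symm), if_neg h]; omega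
      have hsum : (∑ l, k' l) = n := by
        rw [hkk] at hk
        have h1 : (∑ l, ((k' + Finsupp.single j 1 : Fin m →₀ ℕ) l)) = (∑ l, k' l) + 1 := by
          simp only [Finsupp.add_apply, Finset.sum_add_distrib]
          congr 1
          rw [Finset.sum_eq_single j (fun l _ hl => Finsupp.single_eq_of_ne' (Ne.symm hl)) (by simp)]
          simp
        rw [h1] at hk
        omega
      -- split product
      have hprod : (∏ l, (X l + C (a l)) ^ (k l) : MvPolynomial (Fin m) K)
          = (∏ l, (X l + C (a l)) ^ (k' l)) * (X j + C (a j)) := by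
        rw [hkk]
        have : ∀ l, ((X l + C (a l) : MvPolynomial (Fin m) K)) ^ (((k' + Finsupp.single j 1) : Fin m →₀ ℕ) l)
            = (X l + C (a l)) ^ (k' l) * (X l + C (a l)) ^ ((Finsupp.single j 1 : Fin m →₀ ℕ) l) := by
          intro l; rw [Finsupp.add_apply, pow_add]
        rw [Finset.prod_congr rfl (fun l _ => this l), Finset.prod_mul_distrib]
        congr 1
        rw [Finset.prod_eq_single j (fun l _ hl => by simp [Finsupp.single_apply, Ne.symm hl]) (by simp)]
        simp
      rw [hprod, FPaux.coeff_mul_X_addC, ih _ hsum, ih _ hsum]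
      have key : ∀ (c : K) (κ t : ℕ),
          (if t = 0 then (0:K) else (κ.choose (t-1) : K) * c^(κ - (t-1)))
            + c * ((κ.choose t : K) * c^(κ - t))
          = ((κ+1).choose t : K) * c^(κ+1-t) := by
        intro c κ t
        cases t with
        | zero => simp [pow_succ, mul_comm]
        | succ t =>
          rw [if_neg (by omega)]
          have hpascal : ((κ+1).choose (t+1) : K) = (κ.choose t : K) + (κ.choose (t+1) : K) := by
            rw [Nat.choose_succ_succ]; push_cast; ring
          simp only [Nat.succ_sub_one, Nat.succ_sub_succ]
          rw [hpascal, add_mul]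
          congr 1
          by_cases h : t + 1 ≤ κ
          · have he : κ - t = (κ - (t+1)) + 1 := by omega
            rw [he, pow_succ]; ring
          · have h0 : κ.choose (t+1) = 0 := Nat.choose_eq_zero_of_lt (by omega)
            have h0' : κ - t = 0 := by omega
            simp [h0, h0']
      have hkj : k j = k' j + 1 := by rw [hk'j j, if_pos rfl]; omega
      have hiej : (i - Finsupp.single j 1 : Fin m →₀ ℕ) j = i j - 1 := by
        rw [Finsupp.tsub_apply, Finsupp.single_apply, if_pos rfl]
      have hiel : ∀ l, l ≠ j → (i - Finsupp.single j 1 : Fin m →₀ ℕ) l = i l := by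
        intro l hl
        rw [Finsupp.tsub_apply, Finsupp.single_apply, if_neg (Ne.symm hl)]
        omega
      have hkl : ∀ l, l ≠ j → k l = k' l := by
        intro l hl; rw [hk'j l, if_neg hl]
      simp only [← Finset.mul_prod_erase Finset.univ _ (Finset.mem_univ j)]
      have E1 : ∏ l ∈ Finset.univ.erase j,
            (((k' l).choose ((i - Finsupp.single j 1 : Fin m →₀ ℕ) l) : K))
          = ∏ l ∈ Finset.univ.erase j, ((k' l).choose (i l) : K) :=
        Finset.prod_congr rfl fun l hl => by rw [hiel l (Finset.ne_of_mem_erase hl)]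
      have E2 : ∏ l ∈ Finset.univ.erase j,
            (a l)^(k' l - (i - Finsupp.single j 1 : Fin m →₀ ℕ) l)
          = ∏ l ∈ Finset.univ.erase j, (a l)^(k' l - i l) :=
        Finset.prod_congr rfl fun l hl => by rw [hiel l (Finset.ne_of_mem_erase hl)]
      have E3 : ∏ l ∈ Finset.univ.erase j, (((k l).choose (i l) : K))
          = ∏ l ∈ Finset.univ.erase j, ((k' l).choose (i l) : K) :=
        Finset.prod_congr rfl fun l hl => by rw [hkl l (Finset.ne_of_mem_erase hl)]
      have E4 : ∏ l ∈ Finset.univ.erase j, (a l)^(k l - i l)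
          = ∏ l ∈ Finset.univ.erase j, (a l)^(k' l - i l) :=
        Finset.prod_congr rfl fun l hl => by rw [hkl l (Finset.ne_of_mem_erase hl)]
      rw [E1, E2, E3, E4]
      set P := ∏ l ∈ Finset.univ.erase j, ((k' l).choose (i l) : K) with hP
      set A := ∏ l ∈ Finset.univ.erase j, a l ^ (k' l - i l) with hA
      rw [hkj, hiej]
      by_cases hij : i j = 0
      · rw [if_pos hij, hij]
        simp only [Nat.choose_zero_right, Nat.cast_one, Nat.sub_zero]
        rw [pow_succ]
        ring
      · rw [if_neg hij]
        have hk2 := key (a j) (k' j) (i j)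
        rw [if_neg hij] at hk2
        calc ((k' j).choose (i j - 1) : K) * P * (a j ^ (k' j - (i j - 1)) * A)
              + a j * (((k' j).choose (i j) : K) * P * (a j ^ (k' j - i j) * A))
            = (((k' j).choose (i j - 1) : K) * a j ^ (k' j - (i j - 1))
                + a j * (((k' j).choose (i j) : K) * a j ^ (k' j - i j))) * (P * A) := by ring
          _ = (((k' j + 1).choose (i j) : K) * a j ^ (k' j + 1 - i j)) * (P * A) := by rw [hk2]
          _ = ((k' j + 1).choose (i j) : K) * P * (a j ^ (k' j + 1 - i j) * A) := by ring
  exact H _ k rfl i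

lemma FPaux.eval_mvHasseDeriv (a : Fin m → K) (i : Fin m →₀ ℕ) (F : MvPolynomial (Fin m) K) :
    eval a (mvHasseDeriv i F) = coeff i (aeval (fun j => X j + C (a j)) F) := by
  unfold mvHasseDeriv
  rw [Finsupp.sum, map_sum]
  conv_rhs => rw [F.as_sum, map_sum]
  rw [MvPolynomial.coeff_sum]
  apply Finset.sum_congr rfl
  intro k hk
  rw [eval_monomial, aeval_monomial, algebraMap_eq, coeff_C_mul, Finsupp.prod_pow,
    Finsupp.prod_pow, FPaux.coeffG]
  have hc : ((i.prod fun j ij => (k j).choose ij : ℕ) : K) = ∏ j, ((k j).choose (i j) : K) := by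
    rw [Finsupp.prod_fintype _ _ (fun j => Nat.choose_zero_right _)]
    push_cast
    rfl
  rw [hc]
  simp only [Finsupp.tsub_apply]
  rw [show coeff k F = (AddMonoidAlgebra.coeff F) k from rfl]
  ring

lemma FPaux.mvHasseDeriv_zero (F : MvPolynomial (Fin m) K) : mvHasseDeriv 0 F = F := by
  unfold mvHasseDeriv
  simp only [Finsupp.prod_zero_index, Nat.cast_one, one_mul, tsub_zero]
  conv_rhs => rw [F.as_sum]
  rfl

end Aux

section Aux2

variable {K : Type*} [CommRing K] {m : ℕ}

lemma FPaux.coeff_eq_zero_of_monomial_dvd {r i : Fin m →₀ ℕ} {Q : MvPolynomial (Fin m) K}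
    (h : (monomial r (1 : K)) ∣ Q) (hri : ¬ r ≤ i) : coeff i Q = 0 := by
  obtain ⟨Q', rfl⟩ := h
  rw [coeff_monomial_mul', if_neg hri]

lemma FPaux.monomial_dvd_tau_gen (a : Fin m → K) (S : Fin m → Finset K) (ha : ∀ j, a j ∈ S j)
    (r : Fin m →₀ ℕ) (p : MvPolynomial (Fin m) K) :
    (monomial r (1 : K)) ∣
      aeval (fun j => X j + C (a j)) (p * ∏ j, (∏ s ∈ S j, (X j - C s)) ^ (r j)) := by
  rw [map_mul]
  apply Dvd.dvd.mul_left _ _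
  rw [map_prod]
  have hmon : (monomial r (1 : K) : MvPolynomial (Fin m) K) = ∏ j, (X j) ^ (r j) := by
    rw [monomial_eq, Finsupp.prod_pow]
    simp
  rw [hmon]
  apply Finset.prod_dvd_prod_of_dvd
  intro j _
  rw [map_pow]
  apply pow_dvd_pow_of_dvd
  rw [map_prod]
  have : ∀ s ∈ S j, aeval (fun j => X j + C (a j)) ((X j - C s : MvPolynomial (Fin m) K))
      = X j + C (a j) - C s := by
    intro s _
    rw [map_sub, aeval_X, aeval_C]
    rfl
  rw [Finset.prod_congr rfl this]
  have := Finset.dvd_prod_of_mem (fun s => (X j + C (a j) - C s : MvPolynomial (Fin m) K)) (ha j)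
  simpa using this

end Aux2

section Aux3

variable {K : Type*} [Field K] {m : ℕ}

lemma FPaux.exists_le_of_coeff_ne_zero {M : Set (Fin m →₀ ℕ)}
    {z : MvPolynomial (Fin m) K} (hz : z ∈ Ideal.span ((fun u => monomial u (1:K)) '' M)) :
    ∀ l, coeff l z ≠ 0 → ∃ u ∈ M, u ≤ l := by
  induction hz using Submodule.span_induction with
  | mem x h =>
    obtain ⟨u, hu, rfl⟩ := h
    intro l hl
    rw [coeff_monomial] at hl
    split at hl
    · exact ⟨u, hu, le_of_eq (by assumption)⟩
    · exact absurd rfl hl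
  | zero => simp
  | add x y hx hy ihx ihy =>
    intro l hl
    rw [coeff_add] at hl
    by_cases h : coeff l x ≠ 0
    · exact ihx l h
    · push_neg at h
      exact ihy l (by rw [h, zero_add] at hl; exact hl)
  | smul a x hx ih =>
    intro l hl
    rw [smul_eq_mul, coeff_mul] at hl
    obtain ⟨⟨u, v⟩, hmem, hne⟩ := Finset.exists_ne_zero_of_sum_ne_zero hl
    have hv : coeff v x ≠ 0 := fun h => hne (by simp [h])
    obtain ⟨w, hw, hwv⟩ := ih v hv
    refine ⟨w, hw, hwv.trans ?_⟩
    have huv : u + v = l := Finset.HasAntidiagonal.mem_antidiagonal.mp hmem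
    calc v ≤ u + v := le_add_self
    _ = l := huv

lemma FPaux.span_footprint_sup_eq_top (ord : MonomialOrder (Fin m))
    (Kid : Ideal (MvPolynomial (Fin m) K)) :
    Submodule.span K ((fun t => monomial t (1:K)) '' (footprint ord Kid))
      ⊔ Submodule.restrictScalars K Kid = ⊤ := by
  set Msub := Submodule.span K ((fun t => monomial t (1:K)) '' (footprint ord Kid))
      ⊔ Submodule.restrictScalars K Kid with hMsub
  rw [eq_top_iff]
  rintro F -
  have main : ∀ s : ord.syn, ∀ F : MvPolynomial (Fin m) K,
      (∀ k ∈ F.support, ord.toSyn k ≤ s) → F ∈ Msub := by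
    intro s
    induction s using WellFoundedLT.induction with
    | _ s ih =>
      intro F hF
      by_cases hF0 : F = 0
      · simp [hF0]
      have hsupp : F.support.Nonempty := Finset.nonempty_iff_ne_empty.mpr (mt support_eq_empty.mp hF0)
      have step : ∀ F' : MvPolynomial (Fin m) K,
          (∀ k ∈ F'.support, ord.toSyn k < s) → F' ∈ Msub := by
        intro F' h
        by_cases h0 : F' = 0
        · simp [h0]
        have hs' : F'.support.Nonempty := Finset.nonempty_iff_ne_empty.mpr (mt support_eq_empty.mp h0)
        have hne : (F'.support.image ord.toSyn).Nonempty := hs'.image _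
        set t := (F'.support.image ord.toSyn).max' hne with ht
        obtain ⟨k0, hk0, hk0t⟩ := Finset.mem_image.mp ((F'.support.image ord.toSyn).max'_mem hne)
        have hts : t < s := by rw [← ht] at hk0t; rw [← hk0t]; exact h k0 hk0
        exact ih t hts F' (fun k hk => Finset.le_max' _ _ (Finset.mem_image_of_mem _ hk))
      have hne : (F.support.image ord.toSyn).Nonempty := hsupp.image _
      obtain ⟨l, hlmem, hlmax⟩ : ∃ l ∈ F.support, ∀ k ∈ F.support,
          ord.toSyn k ≤ ord.toSyn l := by
        obtain ⟨l, hl, hlt⟩ := Finset.mem_image.mp ((F.support.image ord.toSyn).max'_mem hne)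
        exact ⟨l, hl, fun k hk => by
          rw [hlt]; exact Finset.le_max' _ _ (Finset.mem_image_of_mem _ hk)⟩
      have hls : ord.toSyn l ≤ s := hF l hlmem
      have hc : coeff l F ≠ 0 := mem_support_iff.mp hlmem
      by_cases hΔ : l ∈ footprint ord Kid
      · set F' := F - monomial l (coeff l F) with hF'
        have hmono : (monomial l (coeff l F) : MvPolynomial (Fin m) K) ∈ Msub := by
          have h1 : (monomial l (1:K)) ∈ Msub := by
            apply Submodule.mem_sup_left
            exact Submodule.subset_span ⟨l, hΔ, rfl⟩
          have := Submodule.smul_mem Msub (coeff l F) h1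
          rwa [smul_monomial, smul_eq_mul, mul_one] at this
        have hF'mem : F' ∈ Msub := by
          apply step
          intro k hk
          have hkl : k ≠ l := by
            intro h
            apply mem_support_iff.mp hk
            rw [hF', h]
            simp [coeff_sub, coeff_monomial]
          have hkF : k ∈ F.support := by
            rw [mem_support_iff]
            intro h
            apply mem_support_iff.mp hk
            rw [hF']
            simp [coeff_sub, coeff_monomial, if_neg (Ne.symm hkl), h]
          exact lt_of_lt_of_le
            (lt_of_le_of_ne (hlmax k hkF) (fun h => hkl (ord.toSyn.injective h))) hls
        have : F = F' + monomial l (coeff l F) := by rw [hF']; ring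
        rw [this]
        exact Submodule.add_mem _ hF'mem hmono
      · rw [footprint, Set.mem_setOf_eq, not_not] at hΔ
        have hseteq : {g | ∃ F ∈ Kid, ∃ l, IsLeadingMonomial ord F l ∧
            g = MvPolynomial.monomial l (1 : K)}
            = (fun u => monomial u (1:K)) '' {u | ∃ G ∈ Kid, IsLeadingMonomial ord G u} := by
          ext g
          constructor
          · rintro ⟨G, hG, u, hu, rfl⟩
            exact ⟨u, ⟨G, hG, hu⟩, rfl⟩
          · rintro ⟨u, ⟨G, hG, hu⟩, rfl⟩
            exact ⟨G, hG, u, hu, rfl⟩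
        rw [hseteq] at hΔ
        obtain ⟨u, ⟨G, hGmem, hGlead⟩, hul⟩ :=
          FPaux.exists_le_of_coeff_ne_zero hΔ l (by simp [coeff_monomial])
        have hcG : coeff u G ≠ 0 := mem_support_iff.mp hGlead.1
        set q : MvPolynomial (Fin m) K := monomial (l - u) (coeff l F / coeff u G) with hq
        have hqG : q * G ∈ Msub := by
          apply Submodule.mem_sup_right
          simpa using Ideal.mul_mem_left Kid q hGmem
        set F' := F - q * G with hF'
        have hcoeffqG : ∀ k, coeff k (q * G) ≠ 0 → ord.toSyn k ≤ ord.toSyn l := by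
          intro k hk
          rw [hq, coeff_monomial_mul'] at hk
          split at hk
          · rename_i hle
            have h2 : coeff (k - (l - u)) G ≠ 0 := fun h => hk (by rw [h, mul_zero])
            have h3 : ord.toSyn (k - (l - u)) ≤ ord.toSyn u :=
              hGlead.2 _ (mem_support_iff.mpr h2)
            have h4 : k = (l - u) + (k - (l - u)) := (add_tsub_cancel_of_le hle).symm
            calc ord.toSyn k = ord.toSyn (l - u) + ord.toSyn (k - (l - u)) := by
                  conv_lhs => rw [h4]
                  rw [map_add]
              _ ≤ ord.toSyn (l - u) + ord.toSyn u := by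
                  exact add_le_add le_rfl h3
              _ = ord.toSyn ((l - u) + u) := by rw [map_add]
              _ = ord.toSyn l := by rw [tsub_add_cancel_of_le hul]
          · exact absurd rfl hk
        have hcoeffl : coeff l (q * G) = coeff l F := by
          rw [hq, coeff_monomial_mul', if_pos tsub_le_self]
          rw [tsub_tsub_cancel_of_le hul]
          exact div_mul_cancel₀ _ hcG
        have hF'mem : F' ∈ Msub := by
          apply step
          intro k hk
          have hkc : coeff k F' ≠ 0 := mem_support_iff.mp hk
          have hkl : k ≠ l := by
            intro h
            apply hkc
            rw [hF', h, coeff_sub, hcoeffl, sub_self]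
          have hkle : ord.toSyn k ≤ ord.toSyn l := by
            rw [hF', coeff_sub] at hkc
            by_cases h1 : coeff k F = 0
            · rw [h1, zero_sub, neg_ne_zero] at hkc
              exact hcoeffqG k hkc
            · exact hlmax k (mem_support_iff.mpr h1)
          exact lt_of_lt_of_le
            (lt_of_le_of_ne hkle (fun h => hkl (ord.toSyn.injective h))) hls
        have : F = F' + q * G := by rw [hF']; ring
        rw [this]
        exact Submodule.add_mem _ hF'mem hqG
  by_cases hF0 : F = 0
  · simp [hF0]
  have hsupp : F.support.Nonempty := Finset.nonempty_iff_ne_empty.mpr (mt support_eq_empty.mp hF0)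
  have hne : (F.support.image ord.toSyn).Nonempty := hsupp.image _
  exact main ((F.support.image ord.toSyn).max' hne) F
    (fun k hk => Finset.le_max' _ _ (Finset.mem_image_of_mem _ hk))

end Aux3

/-- Footprint bound with consecutive derivatives:
`#V_J(I) ⋅ #J ≤ #Δ(I_J)` for any monomial ordering. -/
theorem footprint_bound_consecutive_derivatives {K : Type*} [Field K] {m : ℕ}
    (ord : MonomialOrder (Fin m)) (J : Finset (Fin m →₀ ℕ))
    (hJ : ∀ i ∈ J, ∀ k : Fin m →₀ ℕ, k ≤ i → k ∈ J)
    (I : Ideal (MvPolynomial (Fin m) K)) (S : Fin m → Finset K) :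
    ({a : Fin m → K | (∀ j, a j ∈ S j) ∧
        ∀ F ∈ I, ∀ i ∈ J, MvPolynomial.eval a (mvHasseDeriv i F) = 0}.encard)
        * (J.card : ℕ∞)
      ≤ (footprint ord (I ⊔ Ideal.span {P | ∃ r : Fin m →₀ ℕ, r ∉ J ∧
          P = ∏ j, (∏ s ∈ S j, (X j - C s)) ^ (r j)})).encard := by
  classical
  set gens : Set (MvPolynomial (Fin m) K) := {P | ∃ r : Fin m →₀ ℕ, r ∉ J ∧
      P = ∏ j, (∏ s ∈ S j, (X j - C s)) ^ (r j)} with hgens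
  set Kid : Ideal (MvPolynomial (Fin m) K) := I ⊔ Ideal.span gens with hKid
  set Δ : Set (Fin m →₀ ℕ) := footprint ord Kid with hΔdef
  set V : Set (Fin m → K) := {a : Fin m → K | (∀ j, a j ∈ S j) ∧
      ∀ F ∈ I, ∀ i ∈ J, MvPolynomial.eval a (mvHasseDeriv i F) = 0} with hVdef
  by_cases hΔinf : Δ.Infinite
  · rw [hΔinf.encard_eq]; exact le_top
  rw [Set.not_infinite] at hΔinf
  have hVfin : V.Finite := by
    apply Set.Finite.subset (Set.Finite.pi (fun j => (S j).finite_toSet))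
    intro a ha
    rw [Set.mem_pi]
    intro j _
    exact ha.1 j
  set Vf := hVfin.toFinset with hVf
  set T := hΔinf.toFinset with hT
  rw [hVfin.encard_eq_coe_toFinset_card, hΔinf.encard_eq_coe_toFinset_card]
  rw [← Nat.cast_mul, Nat.cast_le]
  -- now a finite-cardinality statement
  have hcardι : Fintype.card ({a // a ∈ Vf} × {i // i ∈ J}) = Vf.card * J.card := by
    rw [Fintype.card_prod, Fintype.card_coe, Fintype.card_coe]
  -- the linear evaluation map
  set Φ : MvPolynomial (Fin m) K →ₗ[K] (({a // a ∈ Vf} × {i // i ∈ J}) → K) :=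
    { toFun := fun F p => coeff p.2.1 (aeval (fun j => X j + C (p.1.1 j)) F)
      map_add' := fun F G => by funext p; simp [map_add, coeff_add]
      map_smul' := fun c F => by funext p; simp [map_smul, coeff_smul] } with hΦ
  have hΦapply : ∀ F p, Φ F p = coeff p.2.1 (aeval (fun j => X j + C (p.1.1 j)) F) :=
    fun F p => rfl
  have hmemV : ∀ p : {a // a ∈ Vf} × {i // i ∈ J}, p.1.1 ∈ V :=
    fun p => hVfin.mem_toFinset.mp p.1.2
  -- vanishing on I
  have hVanI : ∀ F ∈ I, ∀ a ∈ V, ∀ i ∈ J,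
      coeff i (aeval (fun j => X j + C (a j)) F) = 0 := by
    intro F hF a ha i hi
    rw [← FPaux.eval_mvHasseDeriv]
    exact ha.2 F hF i hi
  -- vanishing on the span of the generators
  have hVanGen : ∀ h ∈ Ideal.span gens, ∀ a ∈ V, ∀ i ∈ J,
      coeff i (aeval (fun j => X j + C (a j)) h) = 0 := by
    intro h hh
    induction hh using Submodule.span_induction with
    | mem x hx =>
      intro a ha i hi
      obtain ⟨r, hr, rfl⟩ := hx
      have hdvd := FPaux.monomial_dvd_tau_gen a S (fun j => ha.1 j) r 1
      rw [one_mul] at hdvd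
      apply FPaux.coeff_eq_zero_of_monomial_dvd hdvd
      intro hri
      exact hr (hJ i hi r hri)
    | zero => intro a ha i hi; simp
    | add x y hx hy ihx ihy =>
      intro a ha i hi
      rw [map_add, coeff_add, ihx a ha i hi, ihy a ha i hi, add_zero]
    | smul q x hx ihx =>
      intro a ha i hi
      rw [smul_eq_mul, map_mul, coeff_mul]
      apply Finset.sum_eq_zero
      rintro ⟨u, v⟩ huv
      have huvi : u + v = i := Finset.HasAntidiagonal.mem_antidiagonal.mp huv
      have hv : v ∈ J := hJ i hi v (by rw [← huvi]; exact le_add_self)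
      rw [ihx a ha v hv, mul_zero]
  -- Φ vanishes on Kid
  have hΦKid : ∀ F ∈ Kid, Φ F = 0 := by
    intro F hF
    rw [hKid] at hF
    obtain ⟨g, hg, h, hh, rfl⟩ := Submodule.mem_sup.mp hF
    funext p
    rw [hΦapply, map_add, coeff_add,
      hVanI g hg p.1.1 (hmemV p) p.2.1 p.2.2,
      hVanGen h hh p.1.1 (hmemV p) p.2.1 p.2.2]
    simp
  -- range of Φ is spanned by footprint monomials
  have hrange : LinearMap.range Φ
      = Submodule.span K (Φ '' ((fun t => monomial t (1:K)) '' Δ)) := by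
    have h1 : LinearMap.range Φ = Submodule.map Φ ⊤ := (Submodule.map_top Φ).symm
    rw [h1, ← FPaux.span_footprint_sup_eq_top ord Kid, Submodule.map_sup,
      Submodule.map_span]
    have h2 : Submodule.map Φ (Submodule.restrictScalars K Kid) = ⊥ := by
      rw [eq_bot_iff]
      rintro x ⟨y, hy, rfl⟩
      rw [Submodule.mem_bot]
      exact hΦKid y hy
    rw [h2, sup_bot_eq]
  -- big exponent
  set N : ℕ := 1 + J.sup (fun k => k.sum fun _ n => n) with hN
  have hNk : ∀ k ∈ J, ∀ j, k j < N := by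
    intro k hk j
    have h1 : k j ≤ k.sum fun _ n => n := by
      rw [Finsupp.sum]
      by_cases hj : j ∈ k.support
      · exact Finset.single_le_sum (f := fun j => k j) (fun _ _ => Nat.zero_le _) hj
      · rw [Finsupp.notMem_support_iff.mp hj]; exact Nat.zero_le _
    have h2 : (k.sum fun _ n => n) ≤ J.sup (fun k => k.sum fun _ n => n) := Finset.le_sup (f := fun k => k.sum fun _ n => n) hk
    omega
  -- the interpolation polynomials
  set FF : (Fin m → K) → (Fin m →₀ ℕ) → MvPolynomial (Fin m) K := fun a i =>
    (∏ j, (X j - C (a j)) ^ (i j)) * ∏ j, (∏ s ∈ (S j).erase (a j), (X j - C s)) ^ N with hFF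
  have htauFF : ∀ (a : Fin m → K) (i : Fin m →₀ ℕ), aeval (fun j => X j + C (a j)) (FF a i)
      = monomial i 1 * aeval (fun j => X j + C (a j))
          (∏ j, (∏ s ∈ (S j).erase (a j), (X j - C s)) ^ N) := by
    intro a i
    rw [hFF]
    simp only
    rw [map_mul]
    congr 1
    rw [map_prod]
    have h1 : ∀ j : Fin m, aeval (fun j => X j + C (a j))
        (((X j - C (a j)) : MvPolynomial (Fin m) K) ^ (i j)) = (X j) ^ (i j) := by
      intro j
      rw [map_pow, map_sub, aeval_X, aeval_C, algebraMap_eq]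
      ring
    rw [Finset.prod_congr rfl (fun j _ => h1 j), monomial_eq, Finsupp.prod_pow]
    simp
  -- diagonal entries are nonzero
  have hdiag : ∀ a ∈ V, ∀ i : Fin m →₀ ℕ,
      coeff i (aeval (fun j => X j + C (a j)) (FF a i)) ≠ 0 := by
    intro a ha i
    rw [htauFF, coeff_monomial_mul', if_pos le_rfl, tsub_self, one_mul]
    have hL : coeff 0 (aeval (fun j => X j + C (a j))
          (∏ j, (∏ s ∈ (S j).erase (a j), (X j - C s)) ^ N))
        = ∏ j, (∏ s ∈ (S j).erase (a j), (a j - s)) ^ N := by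
      rw [← FPaux.eval_mvHasseDeriv, FPaux.mvHasseDeriv_zero, map_prod]
      apply Finset.prod_congr rfl
      intro j _
      rw [map_pow, map_prod]
      congr 1
      apply Finset.prod_congr rfl
      intro s _
      rw [map_sub, eval_X, eval_C]
    rw [hL]
    apply Finset.prod_ne_zero_iff.mpr
    intro j _
    apply pow_ne_zero
    apply Finset.prod_ne_zero_iff.mpr
    intro s hs
    exact sub_ne_zero.mpr (Ne.symm (Finset.ne_of_mem_erase hs))
  -- off-diagonal (different point) entries vanish
  have hoff : ∀ (a : Fin m → K) (i : Fin m →₀ ℕ), ∀ b ∈ V, b ≠ a → ∀ k ∈ J,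
      coeff k (aeval (fun j => X j + C (b j)) (FF a i)) = 0 := by
    intro a i b hb hba k hk
    obtain ⟨j, hj⟩ : ∃ j, b j ≠ a j := by
      by_contra h; push_neg at h; exact hba (funext h)
    have hdvd : (monomial (Finsupp.single j N) (1:K)) ∣
        aeval (fun j => X j + C (b j)) (FF a i) := by
      rw [← X_pow_eq_monomial, hFF]
      simp only
      rw [map_mul]
      apply Dvd.dvd.mul_left
      rw [map_prod]
      have hstep : (X j : MvPolynomial (Fin m) K) ^ N ∣
          aeval (fun j => X j + C (b j))
            ((∏ s ∈ (S j).erase (a j), (X j - C s) : MvPolynomial (Fin m) K) ^ N) := by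
        rw [map_pow]
        apply pow_dvd_pow_of_dvd
        rw [map_prod]
        have heq : ∀ s ∈ (S j).erase (a j), aeval (fun j => X j + C (b j))
            ((X j - C s : MvPolynomial (Fin m) K)) = X j + C (b j) - C s := by
          intro s _
          rw [map_sub, aeval_X, aeval_C]
          rfl
        rw [Finset.prod_congr rfl heq]
        have hbmem : b j ∈ (S j).erase (a j) := Finset.mem_erase.mpr ⟨hj, hb.1 j⟩
        have hd := Finset.dvd_prod_of_mem
          (fun s => (X j + C (b j) - C s : MvPolynomial (Fin m) K)) hbmem
        simpa using hd
      exact hstep.trans (Finset.dvd_prod_of_mem _ (Finset.mem_univ j))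
    apply FPaux.coeff_eq_zero_of_monomial_dvd hdvd
    intro hle
    have h1 : N ≤ k j := by simpa using hle j
    exact absurd (hNk k hk j) (by omega)
  -- entries below the diagonal vanish
  have hlower : ∀ (a : Fin m → K) (i k : Fin m →₀ ℕ), ¬ i ≤ k →
      coeff k (aeval (fun j => X j + C (a j)) (FF a i)) = 0 := by
    intro a i k hik
    exact FPaux.coeff_eq_zero_of_monomial_dvd ⟨_, htauFF a i⟩ hik
  -- every standard basis vector is in the range of Φ
  have hsingle : ∀ (n : ℕ) (i : Fin m →₀ ℕ) (hi : i ∈ J) (a : Fin m → K) (ha : a ∈ Vf),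
      (J.filter fun k => i ≤ k ∧ i ≠ k).card < n →
      (Pi.single (⟨a, ha⟩, ⟨i, hi⟩) 1 : ({a // a ∈ Vf} × {i // i ∈ J}) → K)
        ∈ LinearMap.range Φ := by
    intro n
    induction n with
    | zero => intro i hi a ha h; exact absurd h (Nat.not_lt_zero _)
    | succ n IH =>
      intro i hi a ha hcard
      have haV : a ∈ V := hVfin.mem_toFinset.mp ha
      set E := J.filter (fun k => i ≤ k ∧ i ≠ k) with hE
      have hmemE : ∀ k ∈ E, k ∈ J := fun k hk => (Finset.mem_filter.mp hk).1
      set c := Φ (FF a i) (⟨a, ha⟩, ⟨i, hi⟩) with hc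
      have hc0 : c ≠ 0 := by rw [hc, hΦapply]; exact hdiag a haV i
      have key : (Pi.single (⟨a, ha⟩, ⟨i, hi⟩) 1 : ({a // a ∈ Vf} × {i // i ∈ J}) → K)
          = c⁻¹ • (Φ (FF a i) - ∑ x ∈ E.attach,
              Φ (FF a i) (⟨a, ha⟩, ⟨x.1, hmemE x.1 x.2⟩) •
                (Pi.single (⟨a, ha⟩, ⟨x.1, hmemE x.1 x.2⟩) 1 :
                  ({a // a ∈ Vf} × {i // i ∈ J}) → K)) := by
        funext p
        obtain ⟨b, k'⟩ := p
        simp only [Pi.smul_apply, Pi.sub_apply, Finset.sum_apply, smul_eq_mul]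
        by_cases hb : b = (⟨a, ha⟩ : {x // x ∈ Vf})
        · subst hb
          by_cases hk' : k' = (⟨i, hi⟩ : {y // y ∈ J})
          · subst hk'
            rw [Pi.single_eq_same]
            have hzero : ∀ x ∈ E.attach,
                Φ (FF a i) (⟨a, ha⟩, ⟨x.1, hmemE x.1 x.2⟩) *
                  (Pi.single (⟨a, ha⟩, ⟨x.1, hmemE x.1 x.2⟩) 1 :
                    ({a // a ∈ Vf} × {i // i ∈ J}) → K) (⟨a, ha⟩, ⟨i, hi⟩) = 0 := by
              intro x hx
              have hne : ((⟨a, ha⟩, ⟨i, hi⟩) : {x // x ∈ Vf} × {y // y ∈ J})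
                  ≠ (⟨a, ha⟩, ⟨x.1, hmemE x.1 x.2⟩) := by
                intro h
                have h2 := congrArg (fun z => z.2.1) h
                simp only at h2
                exact (Finset.mem_filter.mp x.2).2.2 h2
              rw [Pi.single_eq_of_ne hne, mul_zero]
            rw [Finset.sum_eq_zero hzero, sub_zero, ← hc]
            exact (inv_mul_cancel₀ hc0).symm
          · have hne1 : ((⟨a, ha⟩, k') : {x // x ∈ Vf} × {y // y ∈ J})
                ≠ (⟨a, ha⟩, ⟨i, hi⟩) := by
              intro h
              exact hk' (congrArg Prod.snd h)
            rw [Pi.single_eq_of_ne hne1]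
            by_cases hik : i ≤ k'.1
            · have hik' : i ≠ k'.1 := fun h => hk' (Subtype.ext h.symm)
              have hk'E : k'.1 ∈ E := Finset.mem_filter.mpr ⟨k'.2, hik, hik'⟩
              have hothers : ∀ x ∈ E.attach, x ≠ (⟨k'.1, hk'E⟩ : {x // x ∈ E}) →
                  Φ (FF a i) (⟨a, ha⟩, ⟨x.1, hmemE x.1 x.2⟩) *
                    (Pi.single (⟨a, ha⟩, ⟨x.1, hmemE x.1 x.2⟩) 1 :
                      ({a // a ∈ Vf} × {i // i ∈ J}) → K) (⟨a, ha⟩, k') = 0 := by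
                intro x hx hxne
                have hne : ((⟨a, ha⟩, k') : {x // x ∈ Vf} × {y // y ∈ J})
                    ≠ (⟨a, ha⟩, ⟨x.1, hmemE x.1 x.2⟩) := by
                  intro h
                  apply hxne
                  apply Subtype.ext
                  have h2 := congrArg (fun z => z.2.1) h
                  simp only at h2
                  exact h2.symm
                rw [Pi.single_eq_of_ne hne, mul_zero]
              have hsum : (∑ x ∈ E.attach,
                  Φ (FF a i) (⟨a, ha⟩, ⟨x.1, hmemE x.1 x.2⟩) *
                    (Pi.single (⟨a, ha⟩, ⟨x.1, hmemE x.1 x.2⟩) 1 :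
                      ({a // a ∈ Vf} × {i // i ∈ J}) → K) (⟨a, ha⟩, k'))
                  = Φ (FF a i) (⟨a, ha⟩, k') := by
                rw [Finset.sum_eq_single_of_mem (⟨k'.1, hk'E⟩ : {x // x ∈ E})
                  (Finset.mem_attach _ _) hothers]
                have hqq : ((⟨a, ha⟩, ⟨k'.1, hmemE k'.1 hk'E⟩) :
                    {x // x ∈ Vf} × {y // y ∈ J}) = (⟨a, ha⟩, k') := by
                  have : (⟨k'.1, hmemE k'.1 hk'E⟩ : {y // y ∈ J}) = k' := Subtype.ext rfl
                  rw [this]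
                rw [hqq, Pi.single_eq_same, mul_one]
              rw [hsum, sub_self, mul_zero]
            · have h0 : Φ (FF a i) (⟨a, ha⟩, k') = 0 := by
                rw [hΦapply]; exact hlower a i k'.1 hik
              have hzero : ∀ x ∈ E.attach,
                  Φ (FF a i) (⟨a, ha⟩, ⟨x.1, hmemE x.1 x.2⟩) *
                    (Pi.single (⟨a, ha⟩, ⟨x.1, hmemE x.1 x.2⟩) 1 :
                      ({a // a ∈ Vf} × {i // i ∈ J}) → K) (⟨a, ha⟩, k') = 0 := by
                intro x hx
                have hne : ((⟨a, ha⟩, k') : {x // x ∈ Vf} × {y // y ∈ J})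
                    ≠ (⟨a, ha⟩, ⟨x.1, hmemE x.1 x.2⟩) := by
                  intro h
                  have h2 := congrArg (fun z => z.2.1) h
                  simp only at h2
                  apply hik
                  rw [h2]
                  exact (Finset.mem_filter.mp x.2).2.1
                rw [Pi.single_eq_of_ne hne, mul_zero]
              rw [h0, Finset.sum_eq_zero hzero, sub_zero, mul_zero]
        · have hbne : b.1 ≠ a := fun h => hb (Subtype.ext h)
          have hbV : b.1 ∈ V := hVfin.mem_toFinset.mp b.2
          have h0 : Φ (FF a i) (b, k') = 0 := by
            rw [hΦapply]; exact hoff a i b.1 hbV hbne k'.1 k'.2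
          have hzero : ∀ x ∈ E.attach,
              Φ (FF a i) (⟨a, ha⟩, ⟨x.1, hmemE x.1 x.2⟩) *
                (Pi.single (⟨a, ha⟩, ⟨x.1, hmemE x.1 x.2⟩) 1 :
                  ({a // a ∈ Vf} × {i // i ∈ J}) → K) (b, k') = 0 := by
            intro x hx
            have hne : ((b, k') : {x // x ∈ Vf} × {y // y ∈ J})
                ≠ (⟨a, ha⟩, ⟨x.1, hmemE x.1 x.2⟩) := by
              intro h
              exact hb (congrArg Prod.fst h)
            rw [Pi.single_eq_of_ne hne, mul_zero]
          have hL : (Pi.single (⟨a, ha⟩, ⟨i, hi⟩) 1 :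
              ({a // a ∈ Vf} × {i // i ∈ J}) → K) (b, k') = 0 :=
            Pi.single_eq_of_ne (fun h => hb (congrArg Prod.fst h)) _
          rw [hL, h0, Finset.sum_eq_zero hzero, sub_zero, mul_zero]
      rw [key]
      apply Submodule.smul_mem
      apply Submodule.sub_mem
      · exact ⟨FF a i, rfl⟩
      · apply Submodule.sum_mem
        intro x hx
        apply Submodule.smul_mem
        have hxJ : x.1 ∈ J := hmemE x.1 x.2
        have hxE := Finset.mem_filter.mp x.2
        have hss : (J.filter fun k => x.1 ≤ k ∧ x.1 ≠ k) ⊂ E := by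
          constructor
          · intro k hk
            have hk2 := Finset.mem_filter.mp hk
            apply Finset.mem_filter.mpr
            refine ⟨hk2.1, hxE.2.1.trans hk2.2.1, ?_⟩
            intro h
            apply hxE.2.2
            exact le_antisymm hxE.2.1 (by rw [h]; exact hk2.2.1)
          · intro hsub
            have := hsub (Finset.mem_filter.mpr ⟨hxJ, hxE.2.1, hxE.2.2⟩)
            have h2 := (Finset.mem_filter.mp this).2.2
            exact h2 rfl
        have hlt : (J.filter fun k => x.1 ≤ k ∧ x.1 ≠ k).card < E.card :=
          Finset.card_lt_card hss
        exact IH x.1 hxJ a ha (by omega)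
  -- Φ is surjective
  have hsurj : LinearMap.range Φ = ⊤ := by
    rw [eq_top_iff, ← (Pi.basisFun K ({a // a ∈ Vf} × {i // i ∈ J})).span_eq]
    apply Submodule.span_le.mpr
    rintro x ⟨p, rfl⟩
    rw [Pi.basisFun_apply]
    obtain ⟨⟨a, ha⟩, ⟨i, hi⟩⟩ := p
    exact hsingle ((J.filter fun k => i ≤ k ∧ i ≠ k).card + 1) i hi a ha (Nat.lt_succ_self _)
  -- conclude by rank counting
  have himg : Φ '' ((fun t => monomial t (1:K)) '' Δ)
      = ↑(T.image fun t => Φ (monomial t (1:K))) := by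
    rw [← Set.image_comp, Finset.coe_image, hΔinf.coe_toFinset]
    rfl
  have htop : Submodule.span K
      (↑(T.image fun t => Φ (monomial t (1:K))) : Set (({a // a ∈ Vf} × {i // i ∈ J}) → K))
      = ⊤ := by
    rw [← himg, ← hrange, hsurj]
  have hfinal : Fintype.card ({a // a ∈ Vf} × {i // i ∈ J}) ≤ T.card := by
    have h1 : Module.finrank K (({a // a ∈ Vf} × {i // i ∈ J}) → K)
        = Fintype.card ({a // a ∈ Vf} × {i // i ∈ J}) := Module.finrank_pi K
    have h2 : Module.finrank K
        (Submodule.span K (↑(T.image fun t => Φ (monomial t (1:K))) :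
          Set (({a // a ∈ Vf} × {i // i ∈ J}) → K)))
        ≤ (T.image fun t => Φ (monomial t (1:K))).card :=
      finrank_span_finset_le_card _
    rw [htop, finrank_top] at h2
    calc Fintype.card ({a // a ∈ Vf} × {i // i ∈ J})
        = Module.finrank K (({a // a ∈ Vf} × {i // i ∈ J}) → K) := h1.symm
      _ ≤ (T.image fun t => Φ (monomial t (1:K))).card := h2
      _ ≤ T.card := Finset.card_image_le
  rw [← hcardι]
  exact hfinal
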